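/- arXiv:2011.11037 — 2 statements merged into one kernel-verified Lean document; each statement's English description precedes it below -/
import Mathlib

section
/- For every continuous function $f$ on $[a,b]$ and every $\varepsilon>0$, there exists $n$ and a uniform fuzzy partition $A_1,\ldots,A_n$ of $[a,b]$ such that the inverse F-transform $f^F_n$ satisfies $|f(x)-f^F_n(x)|<\varepsilon$ for all $x\in[a,b]$. -/
open MeasureTheory intervalIntegral Real Set Finset

noncomputable section

/-- Nodes of a uniform fuzzy partition of `[a,b]` with `n` basic functions:
`x i = a + h*(i-1)` for `1 ≤ i ≤ n`, with the conventions `x 0 = a`, `x (n+1) = b`. -/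
def ufpNode (a b : ℝ) (n i : ℕ) : ℝ :=
  if i = 0 then a else if i = n + 1 then b
  else a + ((b - a) / ((n : ℝ) - 1)) * ((i : ℝ) - 1)

/-- `A 1, …, A n` is a uniform fuzzy partition of `[a,b]`. -/
def IsUFP (a b : ℝ) (n : ℕ) (A : ℕ → ℝ → ℝ) : Prop :=
  2 ≤ n ∧ a < b ∧
  (∀ i ∈ Finset.Icc 1 n, ∀ t ∈ Set.Icc a b, A i t ∈ Set.Icc (0:ℝ) 1) ∧
  (∀ i ∈ Finset.Icc 1 n, A i (ufpNode a b n i) = 1) ∧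
  (∀ i ∈ Finset.Icc 1 n, ∀ t ∈ Set.Icc a b,
    t ∉ Set.Ioo (ufpNode a b n (i-1)) (ufpNode a b n (i+1)) → t ≠ ufpNode a b n i →
      A i t = 0) ∧
  (∀ i ∈ Finset.Icc 1 n, ContinuousOn (A i) (Set.Icc a b)) ∧
  (∀ i ∈ Finset.Icc 1 n,
    StrictMonoOn (A i) (Set.Icc (ufpNode a b n (i-1)) (ufpNode a b n i)) ∧
    StrictAntiOn (A i) (Set.Icc (ufpNode a b n i) (ufpNode a b n (i+1)))) ∧
  (∀ t ∈ Set.Icc a b, ∑ i ∈ Finset.Icc 1 n, A i t = 1) ∧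
  (∀ i, 2 ≤ i → i ≤ n - 1 → ∀ t ∈ Set.Icc 0 ((b - a) / ((n : ℝ) - 1)),
    A i (ufpNode a b n i - t) = A i (ufpNode a b n i + t)) ∧
  (∀ i, 2 ≤ i → i ≤ n - 2 → ∀ t ∈ Set.Icc (a + (b - a) / ((n : ℝ) - 1)) b,
    A (i+1) t = A i (t - (b - a) / ((n : ℝ) - 1)))

/-- F-transform component `F_i = (∫ f A_i)/(∫ A_i)`. -/
def Fcomp (a b : ℝ) (A : ℕ → ℝ → ℝ) (f : ℝ → ℝ) (i : ℕ) : ℝ :=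
  (∫ t in a..b, f t * A i t) / (∫ t in a..b, A i t)

/-- Inverse F-transform `f^F_n(t) = ∑ F_i A_i(t)`. -/
def invF (a b : ℝ) (n : ℕ) (A : ℕ → ℝ → ℝ) (f : ℝ → ℝ) (t : ℝ) : ℝ :=
  ∑ i ∈ Finset.Icc 1 n, Fcomp a b A f i * A i t

/-- Uniform triangular basic functions `A_i(t) = max(0, 1 - |t - x_i|/h)`. -/
def triA (a b : ℝ) (n i : ℕ) (t : ℝ) : ℝ :=
  max 0 (1 - |t - (a + (b - a) / ((n : ℝ) - 1) * ((i : ℝ) - 1))| / ((b - a) / ((n : ℝ) - 1)))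

namespace UFP

def xi (a b : ℝ) (n i : ℕ) : ℝ := a + (b - a) / ((n : ℝ) - 1) * ((i : ℝ) - 1)

lemma triA_def (a b : ℝ) (n i : ℕ) (t : ℝ) :
    triA a b n i t = max 0 (1 - |t - xi a b n i| / ((b - a) / ((n : ℝ) - 1))) := rfl

variable {a b : ℝ} {n : ℕ}

lemma hpos (hab : a < b) (hn : 2 ≤ n) : 0 < (b - a) / ((n : ℝ) - 1) := by
  have : (2:ℝ) ≤ n := by exact_mod_cast hn
  exact div_pos (by linarith) (by linarith)

lemma xi_n (hab : a < b) (hn : 2 ≤ n) : xi a b n n = b := by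
  have h2 : (2:ℝ) ≤ n := by exact_mod_cast hn
  have : ((n:ℝ) - 1) ≠ 0 := by linarith
  unfold xi; rw [div_mul_cancel₀ _ this]; ring

lemma xi_one : xi a b n 1 = a := by simp [xi]

lemma xi_succ (i : ℕ) : xi a b n (i+1) = xi a b n i + (b - a) / ((n : ℝ) - 1) := by
  simp only [xi]
  push_cast
  ring

lemma ufpNode_eq {i : ℕ} (hi1 : 1 ≤ i) (hin : i ≤ n) :
    ufpNode a b n i = xi a b n i := by
  unfold ufpNode xi
  rw [if_neg (by omega), if_neg (by omega)]

lemma ufpNode_zero : ufpNode a b n 0 = a := by simp [ufpNode]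

lemma ufpNode_top : ufpNode a b n (n+1) = b := by simp [ufpNode]

lemma triA_nonneg (a b : ℝ) (n i : ℕ) (t : ℝ) : 0 ≤ triA a b n i t := le_max_left _ _

lemma triA_le_one (hab : a < b) (hn : 2 ≤ n) (i : ℕ) (t : ℝ) : triA a b n i t ≤ 1 := by
  have := hpos (a := a) (b := b) hab hn
  rw [triA_def]
  apply max_le (by norm_num)
  have : 0 ≤ |t - xi a b n i| / ((b - a) / ((n : ℝ) - 1)) :=
    div_nonneg (abs_nonneg _) this.le
  linarith

lemma triA_eq (hab : a < b) (hn : 2 ≤ n) {i : ℕ} {t : ℝ}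
    (h : |t - xi a b n i| ≤ (b - a) / ((n : ℝ) - 1)) :
    triA a b n i t = 1 - |t - xi a b n i| / ((b - a) / ((n : ℝ) - 1)) := by
  have hp := hpos (a := a) (b := b) hab hn
  rw [triA_def, max_eq_right]
  have := (div_le_one hp).2 h
  linarith

lemma triA_zero (hab : a < b) (hn : 2 ≤ n) {i : ℕ} {t : ℝ}
    (h : (b - a) / ((n : ℝ) - 1) ≤ |t - xi a b n i|) :
    triA a b n i t = 0 := by
  have hp := hpos (a := a) (b := b) hab hn
  rw [triA_def, max_eq_left]
  have := (one_le_div hp).2 h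
  linarith

lemma triA_pos_iff (hab : a < b) (hn : 2 ≤ n) {i : ℕ} {t : ℝ} :
    0 < triA a b n i t ↔ |t - xi a b n i| < (b - a) / ((n : ℝ) - 1) := by
  have hp := hpos (a := a) (b := b) hab hn
  constructor
  · intro h
    by_contra hc
    push_neg at hc
    rw [triA_zero hab hn hc] at h
    exact lt_irrefl _ h
  · intro h
    rw [triA_eq hab hn h.le]
    have := (div_lt_one hp).2 h
    linarith

lemma triA_continuous (a b : ℝ) (n i : ℕ) : Continuous (triA a b n i) := by
  unfold triA
  exact continuous_const.max
    (continuous_const.sub (((continuous_abs.comp (continuous_id.sub continuous_const))).div_const _))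

lemma triA_node (hab : a < b) (hn : 2 ≤ n) (i : ℕ) : triA a b n i (xi a b n i) = 1 := by
  have hp := hpos (a := a) (b := b) hab hn
  rw [triA_eq hab hn (by simp [hp.le])]
  simp

lemma strictMonoOn_triA (hab : a < b) (hn : 2 ≤ n) (i : ℕ) :
    StrictMonoOn (triA a b n i)
      (Set.Icc (xi a b n i - (b - a) / ((n : ℝ) - 1)) (xi a b n i)) := by
  have hp := hpos (a := a) (b := b) hab hn
  intro s hs t ht hst
  simp only [Set.mem_Icc] at hs ht
  have es : |s - xi a b n i| = xi a b n i - s := by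
    rw [abs_of_nonpos (by linarith)]; ring
  have et : |t - xi a b n i| = xi a b n i - t := by
    rw [abs_of_nonpos (by linarith)]; ring
  rw [triA_eq hab hn (by rw [es]; linarith), triA_eq hab hn (by rw [et]; linarith), es, et]
  have h1 : (xi a b n i - t) / ((b - a) / ((n : ℝ) - 1)) <
      (xi a b n i - s) / ((b - a) / ((n : ℝ) - 1)) :=
    div_lt_div_of_pos_right (by linarith) hp
  linarith

lemma strictAntiOn_triA (hab : a < b) (hn : 2 ≤ n) (i : ℕ) :
    StrictAntiOn (triA a b n i)
      (Set.Icc (xi a b n i) (xi a b n i + (b - a) / ((n : ℝ) - 1))) := by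
  have hp := hpos (a := a) (b := b) hab hn
  intro s hs t ht hst
  simp only [Set.mem_Icc] at hs ht
  have es : |s - xi a b n i| = s - xi a b n i := abs_of_nonneg (by linarith)
  have et : |t - xi a b n i| = t - xi a b n i := abs_of_nonneg (by linarith)
  rw [triA_eq hab hn (by rw [et]; linarith), triA_eq hab hn (by rw [es]; linarith), es, et]
  have h1 : (s - xi a b n i) / ((b - a) / ((n : ℝ) - 1)) <
      (t - xi a b n i) / ((b - a) / ((n : ℝ) - 1)) :=
    div_lt_div_of_pos_right (by linarith) hp
  linarith

lemma triA_sum (hab : a < b) (hn : 2 ≤ n) {t : ℝ} (ht : t ∈ Set.Icc a b) :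
    ∑ i ∈ Finset.Icc 1 n, triA a b n i t = 1 := by
  have hp := hpos (a := a) (b := b) hab hn
  set h := (b - a) / ((n : ℝ) - 1) with hh
  have hne : h ≠ 0 := ne_of_gt hp
  obtain ⟨hta, htb⟩ := ht
  have h2 : (2:ℝ) ≤ n := by exact_mod_cast hn
  have hun : (t - a) / h ≤ (n:ℝ) - 1 := by
    rw [div_le_iff₀ hp]
    have : h * ((n:ℝ) - 1) = b - a := by
      rw [hh, div_mul_cancel₀ _ (by linarith : ((n:ℝ) - 1) ≠ 0)]
    linarith
  set k : ℕ := min (Nat.floor ((t - a) / h)) (n - 2) with hk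
  have hk2 : k ≤ n - 2 := min_le_right _ _
  have hkn : k + 2 ≤ n := by omega
  have hklb : (k:ℝ) ≤ (t - a) / h := by
    have h1 : (k:ℕ) ≤ Nat.floor ((t - a) / h) := min_le_left _ _
    calc (k:ℝ) ≤ (Nat.floor ((t - a) / h) : ℝ) := by exact_mod_cast h1
      _ ≤ (t - a) / h := Nat.floor_le (div_nonneg (by linarith) hp.le)
  have hkub : (t - a) / h ≤ (k:ℝ) + 1 := by
    rcases le_or_gt (Nat.floor ((t - a) / h)) (n - 2) with hc | hc
    · have : k = Nat.floor ((t - a) / h) := min_eq_left hc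
      rw [this]
      exact (Nat.lt_floor_add_one _).le
    · have hkeq : k = n - 2 := min_eq_right hc.le
      have : ((n - 2 : ℕ) : ℝ) = (n:ℝ) - 2 := by
        push_cast [Nat.cast_sub hn]; ring
      rw [hkeq, this]
      linarith
  have ht1 : a + h * k ≤ t := by
    have := (le_div_iff₀ hp).1 hklb
    linarith
  have ht2 : t ≤ a + h * ((k:ℝ) + 1) := by
    have := (div_le_iff₀ hp).1 hkub
    linarith
  have hsub : ({k + 1, k + 2} : Finset ℕ) ⊆ Finset.Icc 1 n := by
    intro i hi
    simp only [Finset.mem_insert, Finset.mem_singleton] at hi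
    simp only [Finset.mem_Icc]
    omega
  have hvanish : ∀ i ∈ Finset.Icc 1 n, i ∉ ({k + 1, k + 2} : Finset ℕ) →
      triA a b n i t = 0 := by
    intro i hi hni
    simp only [Finset.mem_Icc] at hi
    simp only [Finset.mem_insert, Finset.mem_singleton] at hni
    push_neg at hni
    have hxi : xi a b n i = a + h * ((i:ℝ) - 1) := rfl
    rcases (by omega : i ≤ k ∨ k + 3 ≤ i) with hle | hge
    · apply triA_zero hab hn
      have hik : (i:ℝ) ≤ (k:ℝ) := by exact_mod_cast hle
      have : h ≤ t - xi a b n i := by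
        rw [hxi]
        nlinarith
      exact this.trans (le_abs_self _)
    · apply triA_zero hab hn
      have hik : (k:ℝ) + 3 ≤ (i:ℝ) := by exact_mod_cast hge
      have : h ≤ xi a b n i - t := by
        rw [hxi]
        nlinarith
      calc h ≤ xi a b n i - t := this
        _ ≤ |xi a b n i - t| := le_abs_self _
        _ = |t - xi a b n i| := abs_sub_comm _ _
  rw [← Finset.sum_subset hsub hvanish, Finset.sum_pair (by omega : k + 1 ≠ k + 2)]
  have hx1 : xi a b n (k+1) = a + h * k := by
    simp only [xi, ← hh]; push_cast; ring
  have hx2 : xi a b n (k+2) = a + h * ((k:ℝ) + 1) := by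
    simp only [xi, ← hh]; push_cast; ring
  have e1 : |t - xi a b n (k+1)| = t - (a + h * k) := by
    rw [hx1, abs_of_nonneg (by linarith)]
  have e2 : |t - xi a b n (k+2)| = (a + h * ((k:ℝ) + 1)) - t := by
    rw [hx2, abs_of_nonpos (by linarith)]; ring
  rw [triA_eq hab hn (by rw [e1]; linarith), triA_eq hab hn (by rw [e2]; linarith), e1, e2]
  have hs : (t - (a + h * ↑k)) / ((b - a) / ((n:ℝ) - 1))
      + ((a + h * ((k:ℝ) + 1)) - t) / ((b - a) / ((n:ℝ) - 1)) = 1 := by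
    rw [← hh, ← add_div,
      show (t - (a + h * ↑k)) + ((a + h * ((k:ℝ) + 1)) - t) = h by ring, div_self hne]
  linarith

lemma triA_symm (i : ℕ) (t : ℝ) :
    triA a b n i (xi a b n i - t) = triA a b n i (xi a b n i + t) := by
  rw [triA_def, triA_def, show xi a b n i - t - xi a b n i = -t by ring,
    show xi a b n i + t - xi a b n i = t by ring, abs_neg]

lemma triA_shift (i : ℕ) (t : ℝ) :
    triA a b n (i+1) t = triA a b n i (t - (b - a) / ((n : ℝ) - 1)) := by
  rw [triA_def, triA_def, xi_succ,
    show t - (xi a b n i + (b - a) / ((n : ℝ) - 1))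
      = (t - (b - a) / ((n : ℝ) - 1)) - xi a b n i by ring]

lemma xi_mem (hab : a < b) (hn : 2 ≤ n) {i : ℕ} (hi1 : 1 ≤ i) (hin : i ≤ n) :
    xi a b n i ∈ Set.Icc a b := by
  have hp := hpos (a := a) (b := b) hab hn
  have hi1' : (1:ℝ) ≤ (i:ℝ) := by exact_mod_cast hi1
  have hin' : (i:ℝ) ≤ (n:ℝ) := by exact_mod_cast hin
  constructor
  · simp only [xi]
    nlinarith
  · have := xi_n (a := a) (b := b) hab hn
    simp only [xi] at this ⊢
    nlinarith

lemma isUFP_triA (hab : a < b) (hn : 2 ≤ n) : IsUFP a b n (triA a b n) := by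
  have hp := hpos (a := a) (b := b) hab hn
  have node_lo : ∀ i : ℕ, 2 ≤ i → i ≤ n →
      ufpNode a b n (i-1) = xi a b n i - (b - a) / ((n : ℝ) - 1) := by
    intro i hi2 hin
    rw [ufpNode_eq (by omega) (by omega)]
    have h1 : xi a b n ((i-1)+1) = xi a b n (i-1) + (b - a) / ((n : ℝ) - 1) := xi_succ _
    rw [show i - 1 + 1 = i from by omega] at h1
    linarith
  have node_hi : ∀ i : ℕ, 1 ≤ i → i ≤ n - 1 →
      ufpNode a b n (i+1) = xi a b n i + (b - a) / ((n : ℝ) - 1) := by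
    intro i hi1 hin
    rw [ufpNode_eq (by omega) (by omega), xi_succ]
  refine ⟨hn, hab, ?_, ?_, ?_, ?_, ?_, ?_, ?_, ?_⟩
  · intro i _ t _
    exact ⟨triA_nonneg _ _ _ _ _, triA_le_one hab hn i t⟩
  · intro i hi
    simp only [Finset.mem_Icc] at hi
    rw [ufpNode_eq hi.1 hi.2]
    exact triA_node hab hn i
  · -- support
    intro i hi t ht hno hne'
    simp only [Finset.mem_Icc] at hi
    obtain ⟨hta, htb⟩ := ht
    apply triA_zero hab hn
    by_contra hc
    push_neg at hc
    rw [abs_lt] at hc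
    rw [ufpNode_eq hi.1 hi.2] at hne'
    apply hno
    constructor
    · rcases eq_or_lt_of_le hi.1 with h1 | h1
      · rw [show i - 1 = 0 from by omega, ufpNode_zero]
        have hxa : xi a b n i = a := by rw [← h1, xi_one]
        exact hta.lt_of_ne (fun h => hne' (h ▸ hxa.symm))
      · rw [node_lo i (by omega) hi.2]
        linarith [hc.1]
    · rcases eq_or_lt_of_le hi.2 with h1 | h1
      · rw [h1, ufpNode_top]
        have hxb : xi a b n i = b := by rw [h1, xi_n hab hn]
        exact lt_of_le_of_ne htb (fun h => hne' (h.trans hxb.symm))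
      · rw [node_hi i hi.1 (by omega)]
        linarith [hc.2]
  · intro i _
    exact (triA_continuous a b n i).continuousOn
  · -- mono/anti
    intro i hi
    simp only [Finset.mem_Icc] at hi
    constructor
    · apply (strictMonoOn_triA hab hn i).mono
      rw [ufpNode_eq hi.1 hi.2]
      apply Set.Icc_subset_Icc_left
      rcases eq_or_lt_of_le hi.1 with h1 | h1
      · rw [show i - 1 = 0 from by omega, ufpNode_zero, ← h1, xi_one]
        linarith
      · rw [node_lo i (by omega) hi.2]
    · apply (strictAntiOn_triA hab hn i).mono
      rw [ufpNode_eq hi.1 hi.2]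
      apply Set.Icc_subset_Icc_right
      rcases eq_or_lt_of_le hi.2 with h1 | h1
      · have e1 : ufpNode a b n (i+1) = b := by rw [h1]; exact ufpNode_top
        have e2 : xi a b n i = b := by rw [h1]; exact xi_n hab hn
        rw [e1]
        linarith
      · rw [node_hi i hi.1 (by omega)]
  · intro t ht
    exact triA_sum hab hn ht
  · -- symmetry
    intro i hi2 hin t _
    rw [ufpNode_eq (by omega) (by omega)]
    exact triA_symm i t
  · -- shift
    intro i _ _ t _
    exact triA_shift i t

lemma integral_triA_pos (hab : a < b) (hn : 2 ≤ n) {i : ℕ} (hi1 : 1 ≤ i) (hin : i ≤ n) :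
    0 < ∫ t in a..b, triA a b n i t := by
  have hp := hpos (a := a) (b := b) hab hn
  obtain ⟨hxa, hxb⟩ := xi_mem hab hn hi1 hin
  set h := (b - a) / ((n : ℝ) - 1) with hh
  set c := max a (xi a b n i - h) with hc
  set d := min b (xi a b n i + h) with hd
  have hint : ∀ p q : ℝ, IntervalIntegrable (triA a b n i) volume p q :=
    fun p q => (triA_continuous a b n i).intervalIntegrable p q
  have hcd : c < d := max_lt (lt_min hab (by linarith)) (lt_min (by linarith) (by linarith))
  have hac : a ≤ c := le_max_left _ _
  have hdb : d ≤ b := min_le_left _ _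
  have key : 0 < ∫ t in c..d, triA a b n i t := by
    apply intervalIntegral.intervalIntegral_pos_of_pos_on (hint c d) ?_ hcd
    intro x hx
    rw [triA_pos_iff hab hn, abs_lt]
    have h1 := le_max_right a (xi a b n i - h)
    have h2 := min_le_right b (xi a b n i + h)
    exact ⟨by linarith [hx.1], by linarith [hx.2]⟩
  have h1 : 0 ≤ ∫ t in a..c, triA a b n i t :=
    intervalIntegral.integral_nonneg hac (fun u _ => triA_nonneg _ _ _ _ _)
  have h2 : 0 ≤ ∫ t in d..b, triA a b n i t :=
    intervalIntegral.integral_nonneg hdb (fun u _ => triA_nonneg _ _ _ _ _)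
  have e1 := intervalIntegral.integral_add_adjacent_intervals (hint a c) (hint c d)
  have e2 := intervalIntegral.integral_add_adjacent_intervals (hint a d) (hint d b)
  linarith

lemma Fcomp_bound (hab : a < b) (hn : 2 ≤ n) {f : ℝ → ℝ}
    (hf : ContinuousOn f (Set.Icc a b)) {i : ℕ} {x : ℝ}
    (hi1 : 1 ≤ i) (hin : i ≤ n) {η : ℝ}
    (hclose : ∀ t ∈ Set.Icc a b, triA a b n i t ≠ 0 → |f x - f t| ≤ η) :
    |f x - Fcomp a b (triA a b n) f i| ≤ η := by
  have hI := integral_triA_pos hab hn hi1 hin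
  set I := ∫ t in a..b, triA a b n i t with hIdef
  have hfA : IntervalIntegrable (fun t => f t * triA a b n i t) volume a b := by
    apply ContinuousOn.intervalIntegrable
    rw [Set.uIcc_of_le hab.le]
    exact hf.mul (triA_continuous a b n i).continuousOn
  have hgA : IntervalIntegrable (fun t => (f x - f t) * triA a b n i t) volume a b := by
    apply ContinuousOn.intervalIntegrable
    rw [Set.uIcc_of_le hab.le]
    exact (continuousOn_const.sub hf).mul (triA_continuous a b n i).continuousOn
  have hηA : IntervalIntegrable (fun t => η * triA a b n i t) volume a b :=
    (continuous_const.mul (triA_continuous a b n i)).intervalIntegrable _ _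
  have key : |∫ t in a..b, (f x - f t) * triA a b n i t| ≤ η * I := by
    calc |∫ t in a..b, (f x - f t) * triA a b n i t|
        ≤ ∫ t in a..b, |(f x - f t) * triA a b n i t| :=
          intervalIntegral.abs_integral_le_integral_abs hab.le
      _ ≤ ∫ t in a..b, η * triA a b n i t := by
          apply intervalIntegral.integral_mono_on hab.le hgA.abs hηA
          intro t ht
          rw [abs_mul, abs_of_nonneg (triA_nonneg _ _ _ _ _)]
          by_cases hz : triA a b n i t = 0
          · simp [hz]
          · exact mul_le_mul_of_nonneg_right (hclose t ht hz) (triA_nonneg _ _ _ _ _)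
      _ = η * I := intervalIntegral.integral_const_mul _ _
  have hsplit : ∫ t in a..b, (f x - f t) * triA a b n i t
      = f x * I - ∫ t in a..b, f t * triA a b n i t := by
    have e : (fun t => (f x - f t) * triA a b n i t)
        = fun t => f x * triA a b n i t - f t * triA a b n i t := by
      funext t; ring
    rw [e, intervalIntegral.integral_sub (f := fun t => f x * triA a b n i t)
      (g := fun t => f t * triA a b n i t)
      ((continuous_const.mul (triA_continuous a b n i)).intervalIntegrable _ _) hfA,
      intervalIntegral.integral_const_mul]
  have hrw : f x - Fcomp a b (triA a b n) f i
      = (∫ t in a..b, (f x - f t) * triA a b n i t) / I := by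
    rw [hsplit]
    unfold Fcomp
    rw [← hIdef]
    field_simp
  rw [hrw, abs_div, abs_of_pos hI, div_le_iff₀ hI]
  linarith [key]

end UFP

/-- approximation property of the inverse F-transform: for every
continuous `f` and `ε > 0` there is a uniform fuzzy partition whose inverse
F-transform is uniformly `ε`-close to `f`. -/
theorem stmt3 (a b : ℝ) (hab : a < b) (f : ℝ → ℝ)
    (hf : ContinuousOn f (Set.Icc a b)) (ε : ℝ) (hε : 0 < ε) :
    ∃ (n : ℕ) (A : ℕ → ℝ → ℝ), IsUFP a b n A ∧
      ∀ x ∈ Set.Icc a b, |f x - invF a b n A f x| < ε := by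
  have hu : UniformContinuousOn f (Set.Icc a b) :=
    isCompact_Icc.uniformContinuousOn_of_continuous hf
  obtain ⟨δ, hδ, hδ'⟩ := Metric.uniformContinuousOn_iff.1 hu (ε/2) (half_pos hε)
  set n : ℕ := ⌈2 * (b - a) / δ⌉₊ + 2 with hndef
  have hn : 2 ≤ n := by omega
  have hp := UFP.hpos (a := a) (b := b) hab hn
  set h := (b - a) / ((n : ℝ) - 1) with hh
  have hn1pos : (0:ℝ) < (n:ℝ) - 1 := by
    have : (2:ℝ) ≤ (n:ℝ) := by exact_mod_cast hn
    linarith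
  have h2h : 2 * h < δ := by
    have hceil : 2 * (b - a) / δ ≤ (⌈2 * (b - a) / δ⌉₊ : ℝ) := Nat.le_ceil _
    have hn1 : (⌈2 * (b - a) / δ⌉₊ : ℝ) + 1 ≤ (n:ℝ) - 1 := by
      rw [hndef]
      push_cast
      linarith
    have hlt : 2 * (b - a) / δ < (n:ℝ) - 1 := by linarith
    have := (div_lt_iff₀ hδ).1 hlt
    rw [hh, show 2 * ((b - a) / ((n:ℝ) - 1)) = (2 * (b - a)) / ((n:ℝ) - 1) by ring,
      div_lt_iff₀ hn1pos]
    linarith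
  refine ⟨n, triA a b n, UFP.isUFP_triA hab hn, ?_⟩
  intro x hx
  have hsum := UFP.triA_sum hab hn hx
  have hrw : f x - invF a b n (triA a b n) f x
      = ∑ i ∈ Finset.Icc 1 n, (f x - Fcomp a b (triA a b n) f i) * triA a b n i x := by
    unfold invF
    simp only [sub_mul]
    rw [Finset.sum_sub_distrib, ← Finset.mul_sum, hsum, mul_one]
  rw [hrw]
  calc |∑ i ∈ Finset.Icc 1 n, (f x - Fcomp a b (triA a b n) f i) * triA a b n i x|
      ≤ ∑ i ∈ Finset.Icc 1 n, |(f x - Fcomp a b (triA a b n) f i) * triA a b n i x| :=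
        Finset.abs_sum_le_sum_abs _ _
    _ ≤ ∑ i ∈ Finset.Icc 1 n, (ε/2) * triA a b n i x := by
        apply Finset.sum_le_sum
        intro i hi
        simp only [Finset.mem_Icc] at hi
        rw [abs_mul, abs_of_nonneg (UFP.triA_nonneg _ _ _ _ _)]
        by_cases hz : triA a b n i x = 0
        · simp [hz]
        apply mul_le_mul_of_nonneg_right ?_ (UFP.triA_nonneg _ _ _ _ _)
        apply UFP.Fcomp_bound hab hn hf hi.1 hi.2
        intro t ht hz'
        have hxpos : 0 < triA a b n i x :=
          lt_of_le_of_ne (UFP.triA_nonneg _ _ _ _ _) (Ne.symm hz)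
        have htpos : 0 < triA a b n i t :=
          lt_of_le_of_ne (UFP.triA_nonneg _ _ _ _ _) (Ne.symm hz')
        have hx' := (UFP.triA_pos_iff hab hn).1 hxpos
        have ht' := (UFP.triA_pos_iff hab hn).1 htpos
        rw [← hh] at hx' ht'
        have hdist : dist x t < δ := by
          rw [Real.dist_eq]
          calc |x - t| = |(x - UFP.xi a b n i) + (UFP.xi a b n i - t)| := by ring_nf
            _ ≤ |x - UFP.xi a b n i| + |UFP.xi a b n i - t| := abs_add_le _ _
            _ = |x - UFP.xi a b n i| + |t - UFP.xi a b n i| := by rw [abs_sub_comm (UFP.xi a b n i) t]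
            _ < 2 * h := by linarith
            _ < δ := h2h
        have := hδ' x hx t ht hdist
        rw [Real.dist_eq] at this
        exact this.le
    _ = ε/2 := by rw [← Finset.mul_sum, hsum, mul_one]
    _ < ε := by linarith


end
end

section
/- Let $u$ be continuous on $D=[a,b]\times[0,T]$ and for each $n,m$ let $u^F_{n,m}$ be its inverse F-transform with respect to uniform triangular fuzzy partitions with $n$ and $m$ nodes. Then $u^F_{n,m}\to u$ uniformly on $D$ as $n,m\to\infty$. -/
open MeasureTheory intervalIntegral Real Set Finset

noncomputable section

lemma hstep_pos {a b : ℝ} (hab : a < b) {n : ℕ} (hn : 2 ≤ n) :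
    0 < (b - a) / ((n : ℝ) - 1) := by
  have : (2:ℝ) ≤ (n:ℝ) := by exact_mod_cast hn
  apply div_pos <;> linarith

lemma triA_nonneg (a b : ℝ) (n i : ℕ) (t : ℝ) : 0 ≤ triA a b n i t := le_max_left _ _

lemma triA_le_one {a b : ℝ} (hab : a < b) {n : ℕ} (hn : 2 ≤ n) (i : ℕ) (t : ℝ) :
    triA a b n i t ≤ 1 := by
  have h := hstep_pos hab hn
  have h2 : 0 ≤ |t - (a + (b - a) / ((n : ℝ) - 1) * ((i : ℝ) - 1))| / ((b - a) / ((n : ℝ) - 1)) :=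
    div_nonneg (abs_nonneg _) h.le
  unfold triA
  apply max_le (by norm_num)
  linarith

lemma triA_continuous (a b : ℝ) (n i : ℕ) : Continuous (triA a b n i) := by
  unfold triA; fun_prop

lemma triA_support {a b : ℝ} (hab : a < b) {n : ℕ} (hn : 2 ≤ n) {i : ℕ} {t : ℝ}
    (h : triA a b n i t ≠ 0) :
    |t - (a + (b - a) / ((n : ℝ) - 1) * ((i : ℝ) - 1))| < (b - a) / ((n : ℝ) - 1) := by
  have hh := hstep_pos hab hn
  by_contra hc
  push_neg at hc
  apply h
  unfold triA
  rw [max_eq_left]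
  have : 1 ≤ |t - (a + (b - a) / ((n : ℝ) - 1) * ((i : ℝ) - 1))| / ((b - a) / ((n : ℝ) - 1)) :=
    (one_le_div hh).mpr hc
  linarith

lemma triA_sum {a b : ℝ} (hab : a < b) {n : ℕ} (hn : 2 ≤ n) {x : ℝ} (hx : x ∈ Set.Icc a b) :
    ∑ i ∈ Finset.Icc 1 n, triA a b n i x = 1 := by
  set h := (b - a) / ((n : ℝ) - 1) with hh_def
  have hh := hstep_pos hab hn
  have hn1 : (1:ℝ) ≤ (n:ℝ) - 1 := by
    have : (2:ℝ) ≤ (n:ℝ) := by exact_mod_cast hn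
    linarith
  set s := (x - a) / h with hs_def
  have hhs : h * s = x - a := by
    rw [hs_def]; field_simp [ne_of_gt (show (0:ℝ) < h from hh)]
  have hs0 : 0 ≤ s := div_nonneg (by linarith [hx.1]) hh.le
  have hh2 : 0 < h := hh
  have hbah : (b - a) / h = (n:ℝ) - 1 := by
    have hba : b - a ≠ 0 := ne_of_gt (by linarith)
    have hn0 : (n:ℝ) - 1 ≠ 0 := ne_of_gt (by linarith)
    rw [hh_def]; field_simp
  have hs1 : s ≤ (n:ℝ) - 1 := by
    rw [← hbah, hs_def]
    gcongr
    linarith [hx.2]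
  have key : ∀ i : ℕ, triA a b n i x = max 0 (1 - |s - ((i:ℝ) - 1)|) := by
    intro i
    have e : x - (a + h * ((i:ℝ) - 1)) = h * (s - ((i:ℝ) - 1)) := by
      linear_combination (-1 : ℝ) * hhs
    have e2 : |x - (a + h * ((i:ℝ) - 1))| / h = |s - ((i:ℝ) - 1)| := by
      rw [e, abs_mul, abs_of_pos hh2, mul_comm, mul_div_assoc, div_self (ne_of_gt hh2), mul_one]
    unfold triA
    rw [← hh_def, e2]
  set k : ℕ := min (n - 2) ⌊s⌋₊ with hk_def
  have hkn : k ≤ n - 2 := min_le_left _ _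
  have hk1 : (k:ℝ) ≤ s := by
    calc (k:ℝ) ≤ (⌊s⌋₊ : ℝ) := by exact_mod_cast min_le_right _ _
    _ ≤ s := Nat.floor_le hs0
  have hk2 : s ≤ (k:ℝ) + 1 := by
    rcases le_or_gt (⌊s⌋₊) (n - 2) with hle | hlt
    · have : k = ⌊s⌋₊ := min_eq_right hle
      rw [this]
      exact (Nat.lt_floor_add_one s).le
    · have hk' : k = n - 2 := min_eq_left hlt.le
      have : ((n - 2 : ℕ) : ℝ) = (n:ℝ) - 2 := by
        have : (2:ℕ) ≤ n := hn
        push_cast [Nat.cast_sub this]; ring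
      rw [hk', this]; linarith
  have hsub : ({k + 1, k + 2} : Finset ℕ) ⊆ Finset.Icc 1 n := by
    intro i hi
    simp only [Finset.mem_insert, Finset.mem_singleton] at hi
    simp only [Finset.mem_Icc]
    omega
  have hzero : ∀ i ∈ Finset.Icc 1 n, i ∉ ({k + 1, k + 2} : Finset ℕ) → triA a b n i x = 0 := by
    intro i hi hni
    simp only [Finset.mem_insert, Finset.mem_singleton] at hni
    push_neg at hni
    simp only [Finset.mem_Icc] at hi
    rw [key i]
    apply max_eq_left
    have habs : 1 ≤ |s - ((i:ℝ) - 1)| := by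
      rcases (by omega : i ≤ k ∨ k + 3 ≤ i) with hik | hik
      · have hi1 : (1:ℝ) ≤ (i:ℝ) := by exact_mod_cast hi.1
        have : (i:ℝ) ≤ (k:ℝ) := by exact_mod_cast hik
        rw [abs_of_nonneg (by linarith)]
        linarith
      · have : (k:ℝ) + 3 ≤ (i:ℝ) := by exact_mod_cast hik
        rw [abs_of_nonpos (by linarith)]
        linarith
    linarith
  rw [← Finset.sum_subset hsub hzero, Finset.sum_pair (by omega : k + 1 ≠ k + 2), key, key]
  have e1 : ((k + 1 : ℕ) : ℝ) - 1 = (k:ℝ) := by push_cast; ring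
  have e2 : ((k + 2 : ℕ) : ℝ) - 1 = (k:ℝ) + 1 := by push_cast; ring
  rw [e1, e2, abs_of_nonneg (by linarith), abs_of_nonpos (by linarith),
    max_eq_right (by linarith), max_eq_right (by linarith)]
  ring

lemma triA_intervalIntegrable (a b : ℝ) (n i : ℕ) {c d : ℝ} :
    IntervalIntegrable (triA a b n i) volume c d :=
  (triA_continuous a b n i).intervalIntegrable c d

lemma triA_integral_pos {a b : ℝ} (hab : a < b) {n : ℕ} (hn : 2 ≤ n) {i : ℕ}
    (hi : i ∈ Finset.Icc 1 n) : 0 < ∫ y in a..b, triA a b n i y := by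
  have hh := hstep_pos hab hn
  set h := (b - a) / ((n : ℝ) - 1) with hh_def
  have hh2 : 0 < h := hh
  simp only [Finset.mem_Icc] at hi
  have hn1 : (1:ℝ) ≤ (n:ℝ) - 1 := by
    have : (2:ℝ) ≤ (n:ℝ) := by exact_mod_cast hn
    linarith
  have hhba : h ≤ b - a := by
    rw [hh_def]
    calc (b - a) / ((n:ℝ) - 1) ≤ (b - a) / 1 := by
          apply div_le_div_of_nonneg_left (by linarith) (by norm_num) hn1
    _ = b - a := by ring
  set p := a + h * ((i:ℝ) - 1) with hp_def
  have hi1 : (1:ℝ) ≤ (i:ℝ) := by exact_mod_cast hi.1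
  have hin : (i:ℝ) ≤ (n:ℝ) := by exact_mod_cast hi.2
  have hpa : a ≤ p := by
    rw [hp_def]
    nlinarith
  have hpb : p ≤ b := by
    rw [hp_def]
    have : h * ((i:ℝ) - 1) ≤ h * ((n:ℝ) - 1) := by nlinarith
    have h2 : h * ((n:ℝ) - 1) = b - a := by
      rw [hh_def]; field_simp
    linarith
  set c := if p + h / 2 ≤ b then p else p - h / 2 with hc_def
  have hc1 : a ≤ c := by
    rw [hc_def]; split_ifs with hcase
    · exact hpa
    · push_neg at hcase
      linarith
  have hc2 : c + h / 2 ≤ b := by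
    rw [hc_def]; split_ifs with hcase
    · exact hcase
    · linarith
  have hc3 : ∀ y ∈ Set.Icc c (c + h / 2), |y - p| ≤ h / 2 := by
    intro y hy
    rw [hc_def] at hy
    split_ifs at hy with hcase
    · rw [abs_le]; constructor <;> [linarith [hy.1]; linarith [hy.2]]
    · rw [abs_le]; constructor <;> [linarith [hy.1]; linarith [hy.2]]
  have hnn : ∀ y, 0 ≤ triA a b n i y := triA_nonneg a b n i
  have hmid : (h / 4 : ℝ) ≤ ∫ y in c..(c + h / 2), triA a b n i y := by
    have hconst : ∫ y in c..(c + h / 2), (1/2 : ℝ) = h / 4 := by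
      rw [intervalIntegral.integral_const]
      simp only [smul_eq_mul]
      ring
    rw [← hconst]
    apply intervalIntegral.integral_mono_on (by linarith) (intervalIntegrable_const)
      (triA_intervalIntegrable a b n i)
    intro y hy
    have := hc3 y hy
    have h4 : |y - p| / h ≤ 1/2 := by
      rw [div_le_iff₀ hh2]; linarith
    unfold triA
    rw [← hh_def, ← hp_def]
    calc (1/2 : ℝ) ≤ 1 - |y - p| / h := by linarith
    _ ≤ max 0 (1 - |y - p| / h) := le_max_right _ _
  have hsplit1 : ∫ y in a..(c + h/2), triA a b n i y =
      (∫ y in a..c, triA a b n i y) + ∫ y in c..(c + h/2), triA a b n i y :=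
    (intervalIntegral.integral_add_adjacent_intervals (triA_intervalIntegrable a b n i)
      (triA_intervalIntegrable a b n i)).symm
  have hsplit2 : ∫ y in a..b, triA a b n i y =
      (∫ y in a..(c + h/2), triA a b n i y) + ∫ y in (c + h/2)..b, triA a b n i y :=
    (intervalIntegral.integral_add_adjacent_intervals (triA_intervalIntegrable a b n i)
      (triA_intervalIntegrable a b n i)).symm
  have hα : (0:ℝ) ≤ ∫ y in a..c, triA a b n i y :=
    intervalIntegral.integral_nonneg hc1 (fun y _ => hnn y)
  have hβ : (0:ℝ) ≤ ∫ y in (c + h/2)..b, triA a b n i y :=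
    intervalIntegral.integral_nonneg hc2 (fun y _ => hnn y)
  rw [hsplit2, hsplit1]
  have : (0:ℝ) < h / 4 := by linarith
  linarith

lemma Fcomp_close {a b T : ℝ} (hab : a < b) (hT : 0 < T)
    (v : ℝ → ℝ → ℝ) (hv : Continuous fun p : ℝ × ℝ => v p.1 p.2)
    {ε' δ : ℝ} (hε' : 0 < ε') (hδ : 0 < δ)
    (hUC : ∀ p ∈ Set.Icc a b ×ˢ Set.Icc (0:ℝ) T, ∀ q ∈ Set.Icc a b ×ˢ Set.Icc (0:ℝ) T,
      dist p q < δ → |v p.1 p.2 - v q.1 q.2| ≤ ε')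
    {n m : ℕ} (hn : 2 ≤ n) (hm : 2 ≤ m)
    (hhn : 2 * ((b - a) / ((n:ℝ) - 1)) < δ) (hhm : 2 * ((T - 0) / ((m:ℝ) - 1)) < δ)
    {i j : ℕ} (hi : i ∈ Finset.Icc 1 n) (hj : j ∈ Finset.Icc 1 m)
    {x t : ℝ} (hx : x ∈ Set.Icc a b) (ht : t ∈ Set.Icc (0:ℝ) T)
    (hAx : triA a b n i x ≠ 0) (hBt : triA 0 T m j t ≠ 0) :
    |v x t -
      (∫ s in (0:ℝ)..T, ∫ y in a..b, v y s * triA a b n i y * triA 0 T m j s) /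
      (∫ s in (0:ℝ)..T, ∫ y in a..b, triA a b n i y * triA 0 T m j s)| ≤ ε' := by
  have hT0 : (0:ℝ) < T := hT
  set A := triA a b n i with hA_def
  set B := triA 0 T m j with hB_def
  have hAcont : Continuous A := triA_continuous a b n i
  have hBcont : Continuous B := triA_continuous 0 T m j
  have hAnn : ∀ y, 0 ≤ A y := triA_nonneg a b n i
  have hBnn : ∀ y, 0 ≤ B y := triA_nonneg 0 T m j
  set IA := ∫ y in a..b, A y with hIA_def
  set IB := ∫ s in (0:ℝ)..T, B s with hIB_def
  have hIA : 0 < IA := triA_integral_pos hab hn hi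
  have hIB : 0 < IB := triA_integral_pos hT0 hm hj
  set c := v x t with hc_def
  -- closeness on supports
  have hclose : ∀ y ∈ Set.Icc a b, ∀ s ∈ Set.Icc (0:ℝ) T, A y ≠ 0 → B s ≠ 0 →
      |v y s - c| ≤ ε' := by
    intro y hy s hs hAy hBs
    have h1 := triA_support hab hn hAy
    have h2 := triA_support hab hn hAx
    have h3 := triA_support hT0 hm hBs
    have h4 := triA_support hT0 hm hBt
    have hyx : |y - x| < δ := by
      calc |y - x| ≤ |y - (a + (b - a) / ((n : ℝ) - 1) * ((i : ℝ) - 1))| +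
            |(a + (b - a) / ((n : ℝ) - 1) * ((i : ℝ) - 1)) - x| := abs_sub_le _ _ _
      _ < (b - a) / ((n : ℝ) - 1) + (b - a) / ((n : ℝ) - 1) := by
            rw [abs_sub_comm (a + (b - a) / ((n : ℝ) - 1) * ((i : ℝ) - 1)) x]
            exact add_lt_add h1 h2
      _ < δ := by linarith
    have hst : |s - t| < δ := by
      calc |s - t| ≤ |s - (0 + (T - 0) / ((m : ℝ) - 1) * ((j : ℝ) - 1))| +
            |(0 + (T - 0) / ((m : ℝ) - 1) * ((j : ℝ) - 1)) - t| := abs_sub_le _ _ _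
      _ < (T - 0) / ((m : ℝ) - 1) + (T - 0) / ((m : ℝ) - 1) := by
            rw [abs_sub_comm (0 + (T - 0) / ((m : ℝ) - 1) * ((j : ℝ) - 1)) t]
            exact add_lt_add h3 h4
      _ < δ := by linarith
    have := hUC (y, s) (Set.mk_mem_prod hy hs) (x, t) (Set.mk_mem_prod hx ht) ?_
    · exact this
    · rw [Prod.dist_eq]
      simp only [Real.dist_eq]
      exact max_lt hyx hst
  -- inner estimate
  have hvy : ∀ s : ℝ, Continuous fun y => v y s := by
    intro s
    exact hv.comp (continuous_id.prodMk continuous_const)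
  have hinner : ∀ s ∈ Set.Icc (0:ℝ) T, B s ≠ 0 →
      |(∫ y in a..b, v y s * A y) - c * IA| ≤ ε' * IA := by
    intro s hs hBs
    have hint1 : IntervalIntegrable (fun y => v y s * A y) volume a b :=
      ((hvy s).mul hAcont).intervalIntegrable a b
    have hint2 : IntervalIntegrable (fun y => c * A y) volume a b :=
      (continuous_const.mul hAcont).intervalIntegrable a b
    have heq : (∫ y in a..b, v y s * A y) - c * IA
        = ∫ y in a..b, (v y s - c) * A y := by
      have e1 : ∫ y in a..b, (v y s - c) * A y
          = (∫ y in a..b, v y s * A y) - ∫ y in a..b, c * A y := by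
        simp_rw [sub_mul]
        exact intervalIntegral.integral_sub hint1 hint2
      rw [e1, intervalIntegral.integral_const_mul, ← hIA_def]
    rw [heq]
    calc |∫ y in a..b, (v y s - c) * A y| ≤ ∫ y in a..b, |(v y s - c) * A y| :=
          intervalIntegral.abs_integral_le_integral_abs hab.le
    _ ≤ ∫ y in a..b, ε' * A y := by
        apply intervalIntegral.integral_mono_on hab.le
          ((((hvy s).sub continuous_const).mul hAcont).abs.intervalIntegrable a b)
          ((continuous_const.mul hAcont).intervalIntegrable a b)
        intro y hy
        show |(v y s - c) * A y| ≤ ε' * A y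
        rw [abs_mul, abs_of_nonneg (hAnn y)]
        rcases eq_or_ne (A y) 0 with h0 | h0
        · rw [h0]; simp
        · exact mul_le_mul_of_nonneg_right (hclose y hy s hs h0 hBs) (hAnn y)
    _ = ε' * IA := by rw [intervalIntegral.integral_const_mul, ← hIA_def]
  -- outer part
  set W := fun s => ∫ y in a..b, v y s * A y with hW_def
  have hWcont : Continuous W := by
    apply intervalIntegral.continuous_parametric_intervalIntegral_of_continuous'
    exact (hv.comp (continuous_snd.prodMk continuous_fst)).mul (hAcont.comp continuous_snd)
  have hNum : (∫ s in (0:ℝ)..T, ∫ y in a..b, v y s * A y * B s)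
      = ∫ s in (0:ℝ)..T, W s * B s := by
    apply intervalIntegral.integral_congr
    intro s _
    exact intervalIntegral.integral_mul_const (B s) (fun y => v y s * A y)
  have hDen : (∫ s in (0:ℝ)..T, ∫ y in a..b, A y * B s) = IA * IB := by
    have e1 : ∀ s : ℝ, (∫ y in a..b, A y * B s) = IA * B s := fun s =>
      intervalIntegral.integral_mul_const (B s) A
    simp_rw [e1]
    rw [intervalIntegral.integral_const_mul, ← hIB_def]
  rw [hNum, hDen]
  set Num := ∫ s in (0:ℝ)..T, W s * B s with hNum_def
  have hint3 : IntervalIntegrable (fun s => W s * B s) volume 0 T :=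
    (hWcont.mul hBcont).intervalIntegrable 0 T
  have hint4 : IntervalIntegrable (fun s => (c * IA) * B s) volume 0 T :=
    (continuous_const.mul hBcont).intervalIntegrable 0 T
  have key2 : |Num - c * (IA * IB)| ≤ ε' * (IA * IB) := by
    have heq : Num - c * (IA * IB) = ∫ s in (0:ℝ)..T, (W s - c * IA) * B s := by
      have e1 : ∫ s in (0:ℝ)..T, (W s - c * IA) * B s
          = Num - ∫ s in (0:ℝ)..T, (c * IA) * B s := by
        simp_rw [sub_mul]
        exact intervalIntegral.integral_sub hint3 hint4
      rw [e1, intervalIntegral.integral_const_mul, ← hIB_def]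
      ring
    rw [heq]
    calc |∫ s in (0:ℝ)..T, (W s - c * IA) * B s|
        ≤ ∫ s in (0:ℝ)..T, |(W s - c * IA) * B s| :=
          intervalIntegral.abs_integral_le_integral_abs hT0.le
    _ ≤ ∫ s in (0:ℝ)..T, (ε' * IA) * B s := by
        apply intervalIntegral.integral_mono_on hT0.le
          (((hWcont.sub continuous_const).mul hBcont).abs.intervalIntegrable 0 T)
          ((continuous_const.mul hBcont).intervalIntegrable 0 T)
        intro s hs
        show |(W s - c * IA) * B s| ≤ (ε' * IA) * B s
        rw [abs_mul, abs_of_nonneg (hBnn s)]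
        rcases eq_or_ne (B s) 0 with h0 | h0
        · rw [h0]; simp
        · exact mul_le_mul_of_nonneg_right (hinner s hs h0) (hBnn s)
    _ = ε' * (IA * IB) := by
        rw [intervalIntegral.integral_const_mul, ← hIB_def]; ring
  have hden : 0 < IA * IB := mul_pos hIA hIB
  have heq2 : c - Num / (IA * IB) = (c * (IA * IB) - Num) / (IA * IB) := by
    field_simp
  rw [heq2, abs_div, abs_of_pos hden, div_le_iff₀ hden]
  calc |c * (IA * IB) - Num| = |Num - c * (IA * IB)| := abs_sub_comm _ _
  _ ≤ ε' * (IA * IB) := key2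

/-- for continuous `u`, the two-dimensional inverse F-transforms with
respect to uniform triangular partitions converge uniformly to `u` as `n, m → ∞`. -/
theorem stmt19 (a b T : ℝ) (hab : a < b) (hT : 0 < T)
    (u : ℝ → ℝ → ℝ)
    (hu : ContinuousOn (fun p : ℝ × ℝ => u p.1 p.2) (Set.Icc a b ×ˢ Set.Icc 0 T)) :
    ∀ ε > 0, ∃ N : ℕ, 2 ≤ N ∧ ∀ n m : ℕ, N ≤ n → N ≤ m →
      ∀ x ∈ Set.Icc a b, ∀ t ∈ Set.Icc (0:ℝ) T,
        |u x t - ∑ i ∈ Finset.Icc 1 n, ∑ j ∈ Finset.Icc 1 m,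
          ((∫ s in (0:ℝ)..T, ∫ y in a..b, u y s * triA a b n i y * triA 0 T m j s) /
            (∫ s in (0:ℝ)..T, ∫ y in a..b, triA a b n i y * triA 0 T m j s)) *
          triA a b n i x * triA 0 T m j t| < ε := by
  intro ε hε
  set v : ℝ → ℝ → ℝ := fun y s => u (max a (min y b)) (max 0 (min s T)) with hv_def
  have hveq : ∀ y ∈ Set.Icc a b, ∀ s ∈ Set.Icc (0:ℝ) T, v y s = u y s := by
    intro y hy s hs
    rw [hv_def]
    simp only
    rw [min_eq_left hy.2, max_eq_right hy.1, min_eq_left hs.2, max_eq_right hs.1]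
  have hvcont : Continuous fun p : ℝ × ℝ => v p.1 p.2 := by
    have hg : Continuous fun p : ℝ × ℝ => ((max a (min p.1 b)), (max 0 (min p.2 T))) :=
      (continuous_const.max (continuous_fst.min continuous_const)).prodMk
        (continuous_const.max (continuous_snd.min continuous_const))
    have hmap : ∀ p : ℝ × ℝ, ((max a (min p.1 b)), (max 0 (min p.2 T)))
        ∈ Set.Icc a b ×ˢ Set.Icc (0:ℝ) T := by
      intro p
      constructor
      · exact ⟨le_max_left _ _, max_le hab.le (min_le_right _ _)⟩
      · exact ⟨le_max_left _ _, max_le hT.le (min_le_right _ _)⟩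
    exact hu.comp_continuous hg hmap
  have hcomp : IsCompact (Set.Icc a b ×ˢ Set.Icc (0:ℝ) T) := isCompact_Icc.prod isCompact_Icc
  have hUC := hcomp.uniformContinuousOn_of_continuous hvcont.continuousOn
  rw [Metric.uniformContinuousOn_iff] at hUC
  obtain ⟨δ, hδ, hUC⟩ := hUC (ε/2) (by linarith)
  have hUC' : ∀ p ∈ Set.Icc a b ×ˢ Set.Icc (0:ℝ) T, ∀ q ∈ Set.Icc a b ×ˢ Set.Icc (0:ℝ) T,
      dist p q < δ → |v p.1 p.2 - v q.1 q.2| ≤ ε/2 := by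
    intro p hp q hq hpq
    have h2 := hUC p hp q hq hpq
    rw [Real.dist_eq] at h2
    exact h2.le
  obtain ⟨K, hK⟩ := exists_nat_gt (max (2*(b-a)) (2*T) / δ)
  refine ⟨K + 2, by omega, ?_⟩
  intro n m hn hm x hx t ht
  have hn2 : 2 ≤ n := by omega
  have hm2 : 2 ≤ m := by omega
  have hstep : ∀ k : ℕ, K + 2 ≤ k → ∀ C : ℝ, 2 * C ≤ max (2*(b-a)) (2*T) →
      2 * (C / ((k:ℝ) - 1)) < δ := by
    intro k hk C hC
    have hk1 : (K:ℝ) + 1 ≤ (k:ℝ) - 1 := by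
      have : ((K:ℕ):ℝ) + 2 ≤ (k:ℝ) := by exact_mod_cast hk
      linarith
    have hkpos : (0:ℝ) < (k:ℝ) - 1 := by
      have : (0:ℝ) ≤ (K:ℝ) := Nat.cast_nonneg K
      linarith
    have hmax : max (2*(b-a)) (2*T) < ((k:ℝ) - 1) * δ := by
      have h1 : max (2*(b-a)) (2*T) / δ < (k:ℝ) - 1 := by
        have : ((K:ℕ):ℝ) < (K:ℝ) + 1 := by linarith
        linarith [hK]
      exact (div_lt_iff₀ hδ).mp h1
    have e : 2 * (C / ((k:ℝ) - 1)) = 2 * C / ((k:ℝ) - 1) := by ring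
    rw [e, div_lt_iff₀ hkpos]
    nlinarith
  have hhn : 2 * ((b - a) / ((n:ℝ) - 1)) < δ :=
    hstep n hn (b - a) (le_max_left _ _)
  have hhm : 2 * ((T - 0) / ((m:ℝ) - 1)) < δ := by
    rw [sub_zero]
    exact hstep m hm T (le_max_right _ _)
  -- replace u by v in the goal
  have hfix : ∀ i j : ℕ,
      (∫ s in (0:ℝ)..T, ∫ y in a..b, u y s * triA a b n i y * triA 0 T m j s)
      = ∫ s in (0:ℝ)..T, ∫ y in a..b, v y s * triA a b n i y * triA 0 T m j s := by
    intro i j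
    apply intervalIntegral.integral_congr
    intro s hs
    rw [Set.uIcc_of_le hT.le] at hs
    apply intervalIntegral.integral_congr
    intro y hy
    rw [Set.uIcc_of_le hab.le] at hy
    show u y s * triA a b n i y * triA 0 T m j s = v y s * triA a b n i y * triA 0 T m j s
    rw [hveq y hy s hs]
  have hgoal_eq : (∑ i ∈ Finset.Icc 1 n, ∑ j ∈ Finset.Icc 1 m,
        ((∫ s in (0:ℝ)..T, ∫ y in a..b, u y s * triA a b n i y * triA 0 T m j s) /
          (∫ s in (0:ℝ)..T, ∫ y in a..b, triA a b n i y * triA 0 T m j s)) *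
        triA a b n i x * triA 0 T m j t)
      = ∑ i ∈ Finset.Icc 1 n, ∑ j ∈ Finset.Icc 1 m,
        ((∫ s in (0:ℝ)..T, ∫ y in a..b, v y s * triA a b n i y * triA 0 T m j s) /
          (∫ s in (0:ℝ)..T, ∫ y in a..b, triA a b n i y * triA 0 T m j s)) *
        triA a b n i x * triA 0 T m j t := by
    apply Finset.sum_congr rfl
    intro i _
    apply Finset.sum_congr rfl
    intro j _
    rw [hfix i j]
  rw [hgoal_eq, ← hveq x hx t ht]
  set F : ℕ → ℕ → ℝ := fun i j =>
      (∫ s in (0:ℝ)..T, ∫ y in a..b, v y s * triA a b n i y * triA 0 T m j s) /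
        (∫ s in (0:ℝ)..T, ∫ y in a..b, triA a b n i y * triA 0 T m j s) with hF_def
  have hsumA : ∑ i ∈ Finset.Icc 1 n, triA a b n i x = 1 := triA_sum hab hn2 hx
  have hsumB : ∑ j ∈ Finset.Icc 1 m, triA 0 T m j t = 1 := triA_sum hT hm2 ht
  have hrep : v x t = ∑ i ∈ Finset.Icc 1 n, ∑ j ∈ Finset.Icc 1 m,
      v x t * triA a b n i x * triA 0 T m j t := by
    have h1 : ∀ i : ℕ, ∑ j ∈ Finset.Icc 1 m, v x t * triA a b n i x * triA 0 T m j t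
        = v x t * triA a b n i x := by
      intro i
      rw [← Finset.mul_sum, hsumB, mul_one]
    rw [Finset.sum_congr rfl (fun i _ => h1 i), ← Finset.mul_sum, hsumA, mul_one]
  have hdiff : v x t - (∑ i ∈ Finset.Icc 1 n, ∑ j ∈ Finset.Icc 1 m,
        F i j * triA a b n i x * triA 0 T m j t)
      = ∑ i ∈ Finset.Icc 1 n, ∑ j ∈ Finset.Icc 1 m,
        (v x t - F i j) * (triA a b n i x * triA 0 T m j t) := by
    conv_lhs => rw [hrep]
    rw [← Finset.sum_sub_distrib]
    apply Finset.sum_congr rfl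
    intro i _
    rw [← Finset.sum_sub_distrib]
    apply Finset.sum_congr rfl
    intro j _
    ring
  rw [hdiff]
  have hbound : ∀ i ∈ Finset.Icc 1 n, ∀ j ∈ Finset.Icc 1 m,
      |(v x t - F i j) * (triA a b n i x * triA 0 T m j t)|
      ≤ (ε/2) * (triA a b n i x * triA 0 T m j t) := by
    intro i hi j hj
    rcases eq_or_ne (triA a b n i x) 0 with h0 | h0
    · rw [h0]; simp
    rcases eq_or_ne (triA 0 T m j t) 0 with h1 | h1
    · rw [h1]; simp
    have hkey : |v x t - F i j| ≤ ε/2 := by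
      rw [hF_def]
      exact Fcomp_close hab hT v hvcont (by linarith) hδ hUC' hn2 hm2 hhn hhm hi hj hx ht h0 h1
    rw [abs_mul, abs_of_nonneg (mul_nonneg (triA_nonneg a b n i x) (triA_nonneg 0 T m j t))]
    exact mul_le_mul_of_nonneg_right hkey
      (mul_nonneg (triA_nonneg a b n i x) (triA_nonneg 0 T m j t))
  calc |∑ i ∈ Finset.Icc 1 n, ∑ j ∈ Finset.Icc 1 m,
        (v x t - F i j) * (triA a b n i x * triA 0 T m j t)|
      ≤ ∑ i ∈ Finset.Icc 1 n, |∑ j ∈ Finset.Icc 1 m,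
        (v x t - F i j) * (triA a b n i x * triA 0 T m j t)| :=
        Finset.abs_sum_le_sum_abs _ _
    _ ≤ ∑ i ∈ Finset.Icc 1 n, ∑ j ∈ Finset.Icc 1 m,
        |(v x t - F i j) * (triA a b n i x * triA 0 T m j t)| :=
        Finset.sum_le_sum (fun i _ => Finset.abs_sum_le_sum_abs _ _)
    _ ≤ ∑ i ∈ Finset.Icc 1 n, ∑ j ∈ Finset.Icc 1 m,
        (ε/2) * (triA a b n i x * triA 0 T m j t) :=
        Finset.sum_le_sum (fun i hi => Finset.sum_le_sum (fun j hj => hbound i hi j hj))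
    _ = ε/2 := by
        have h1 : ∀ i : ℕ, ∑ j ∈ Finset.Icc 1 m, (ε/2) * (triA a b n i x * triA 0 T m j t)
            = (ε/2) * triA a b n i x := by
          intro i
          rw [show (fun j => (ε/2) * (triA a b n i x * triA 0 T m j t))
              = fun j => ((ε/2) * triA a b n i x) * triA 0 T m j t from by
            funext j; ring]
          rw [← Finset.mul_sum, hsumB, mul_one]
        rw [Finset.sum_congr rfl (fun i _ => h1 i), ← Finset.mul_sum, hsumA, mul_one]
    _ < ε := by linarith

end
end
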